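/- Let p < 0, η > 0, and let a_1 ≥ a_2 ≥ … ≥ a_k ≥ 0 be a nonincreasing sequence of nonnegative reals. Define F(i) = (η + ∑_{j=1}^{i} a_j)^p for 0 ≤ i ≤ k. Then the marginal gains are nondecreasing: for all indices 1 ≤ i' < i ≤ k, F(i') − F(i'−1) ≤ F(i) − F(i−1). -/

import Mathlib

open Real Set

/-- Key convexity-type inequality: for `p < 0`, `0 < s ≤ t`, `u ≥ 0`,
the marginal `(x+u)^p - x^p` is nondecreasing in `x`. -/
lemma pmean_aux_marg (p : ℝ) (hp : p < 0) {s t u : ℝ} (hs : 0 < s) (hst : s ≤ t)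
    (hu : 0 ≤ u) : (s + u) ^ p - s ^ p ≤ (t + u) ^ p - t ^ p := by
  have ht : 0 < t := hs.trans_le hst
  have key : ∀ c : ℝ, 0 < c → ∀ x : ℝ, 0 ≤ x →
      HasDerivAt (fun u : ℝ => (c + u) ^ p) (p * (c + x) ^ (p - 1)) x := by
    intro c hc x hx
    have hcx : (0:ℝ) < c + x := by linarith
    have h1 := Real.hasDerivAt_rpow_const (x := c + x) (p := p) (Or.inl hcx.ne')
    have h2 : HasDerivAt (fun u : ℝ => c + u) 1 x := (hasDerivAt_id x).const_add c
    have h3 := h1.comp x h2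
    rw [mul_one] at h3
    exact h3
  have hg : ∀ x : ℝ, 0 ≤ x → HasDerivAt (fun u : ℝ => (s + u) ^ p - (t + u) ^ p)
      (p * (s + x) ^ (p - 1) - p * (t + x) ^ (p - 1)) x :=
    fun x hx => (key s hs x hx).sub (key t ht x hx)
  have hanti : AntitoneOn (fun u : ℝ => (s + u) ^ p - (t + u) ^ p) (Set.Ici 0) := by
    apply antitoneOn_of_deriv_nonpos (convex_Ici 0)
    · intro x hx
      exact (hg x hx).continuousAt.continuousWithinAt
    · intro x hx
      rw [interior_Ici] at hx
      exact (hg x (le_of_lt hx)).differentiableAt.differentiableWithinAt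
    · intro x hx
      rw [interior_Ici] at hx
      have hx' : 0 < x := hx
      rw [(hg x hx'.le).deriv]
      have h1 : (t + x) ^ (p - 1) ≤ (s + x) ^ (p - 1) :=
        Real.rpow_le_rpow_of_nonpos (by linarith) (by linarith) (by linarith)
      have h2 := mul_le_mul_of_nonpos_left h1 hp.le
      linarith
  have h := hanti (Set.self_mem_Ici) (Set.mem_Ici.mpr hu) hu
  simp only [add_zero] at h
  linarith

/-- Increasing marginals for the `p`-mean welfare objective with `p < 0`:
for a nonincreasing sequence `a 1 ≥ … ≥ a k ≥ 0` and `η > 0`, the function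
`F i = (η + ∑_{j=1}^i a j) ^ p` has nondecreasing marginal gains. -/
theorem pmean_increasing_marginals_neg (p : ℝ) (hp : p < 0)
    (k : ℕ) (η : ℝ) (hη : 0 < η)
    (a : ℕ → ℝ)
    (hnn : ∀ j, 1 ≤ j → j ≤ k → 0 ≤ a j)
    (hanti : ∀ i j, 1 ≤ i → i ≤ j → j ≤ k → a j ≤ a i)
    (F : ℕ → ℝ)
    (hF : ∀ i, i ≤ k → F i = (η + ∑ j ∈ Finset.Icc 1 i, a j) ^ p) :
    ∀ i' i, 1 ≤ i' → i' < i → i ≤ k →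
      F i' - F (i' - 1) ≤ F i - F (i - 1) := by
  intro i' i h1 hlt hk
  obtain ⟨n', rfl⟩ : ∃ m, i' = m + 1 := ⟨i' - 1, (Nat.succ_pred_eq_of_pos h1).symm⟩
  obtain ⟨n, rfl⟩ : ∃ m, i = m + 1 := ⟨i - 1, (Nat.succ_pred_eq_of_pos (by omega)).symm⟩
  simp only [Nat.add_sub_cancel]
  rw [hF _ (by omega), hF _ (by omega), hF _ hk, hF _ (by omega)]
  set S' := ∑ j ∈ Finset.Icc 1 n', a j with hS'
  set S := ∑ j ∈ Finset.Icc 1 n, a j with hS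
  rw [Finset.sum_Icc_succ_top (by omega : 1 ≤ n' + 1), Finset.sum_Icc_succ_top (by omega : 1 ≤ n + 1)]
  rw [← hS', ← hS]
  have hS'nn : 0 ≤ S' := Finset.sum_nonneg fun j hj => by
    rw [Finset.mem_Icc] at hj; exact hnn j hj.1 (by omega)
  have hSS' : S' ≤ S := by
    apply Finset.sum_le_sum_of_subset_of_nonneg
    · exact Finset.Icc_subset_Icc_right (by omega)
    · intro j hj _
      rw [Finset.mem_Icc] at hj; exact hnn j hj.1 (by omega)
  have han : 0 ≤ a (n + 1) := hnn _ (by omega) hk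
  have haa : a (n + 1) ≤ a (n' + 1) := hanti (n' + 1) (n + 1) (by omega) (by omega) hk
  -- Step 1: shrink the increment (rpow is antitone for negative exponent)
  have step1 : (η + (S' + a (n' + 1))) ^ p ≤ (η + (S' + a (n + 1))) ^ p :=
    Real.rpow_le_rpow_of_nonpos (by linarith) (by linarith) hp.le
  -- Step 2: increasing marginals from convexity (via derivative)
  have step2 : ((η + S') + a (n + 1)) ^ p - (η + S') ^ p ≤
      ((η + S) + a (n + 1)) ^ p - (η + S) ^ p :=
    pmean_aux_marg p hp (by linarith) (by linarith) han
  simp only [← add_assoc] at step1 ⊢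
  linarith
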